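/- For odd g ≥ 3, in the abelian group G = ⟨r, s, t | 2r = 0, 4t + 2g·s = 0, 2(g+1)t + g(g+1)s = 0⟩, the elements t + ((g+1)/2)·s, 2t + g·s, and r give a decomposition G ≅ ℤ·(t + ((g+1)/2)s) ⊕ (ℤ/2)·(2t + g·s) ⊕ (ℤ/2)·r. -/
import Mathlib

def relSub (g : ℕ) : Submodule ℤ (ℤ × ℤ × ℤ) :=
  Submodule.span ℤ
    {((2 : ℤ), (0 : ℤ), (0 : ℤ)), ((0 : ℤ), (2 * g : ℤ), (4 : ℤ)),
      ((0 : ℤ), (g * (g + 1) : ℤ), (2 * (g + 1) : ℤ))}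

section aux

variable (g k : ℕ)

/-- Forward map on the free group. -/
def Fhom : (ℤ × ℤ × ℤ) →+ ℤ × ZMod 2 × ZMod 2 :=
  AddMonoidHom.mk' (fun p => (2 * p.2.1 - g * p.2.2,
    ((p.2.1 + (k + 1) * p.2.2 : ℤ) : ZMod 2), ((p.1 : ℤ) : ZMod 2)))
    (by
      intro x y
      refine Prod.ext ?_ (Prod.ext ?_ ?_) <;> simp <;> push_cast <;> ring)

lemma mem1 : ((2 : ℤ), (0 : ℤ), (0 : ℤ)) ∈ relSub g :=
  Submodule.subset_span (by simp)

lemma mem2 : ((0 : ℤ), (2 * g : ℤ), (4 : ℤ)) ∈ relSub g :=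
  Submodule.subset_span (by simp)

lemma mem3 : ((0 : ℤ), (g * (g + 1) : ℤ), (2 * (g + 1) : ℤ)) ∈ relSub g :=
  Submodule.subset_span (by simp)

lemma ker_le (hk : g = 2 * k + 1) :
    relSub g ≤ LinearMap.ker (Fhom g k).toIntLinearMap := by
  rw [relSub, Submodule.span_le]
  have key : ∀ a b c : ℤ, 2 * b - (g:ℤ) * c = 0 → (2:ℤ) ∣ (b + ((k:ℤ) + 1) * c) →
      (2:ℤ) ∣ a → (a, b, c) ∈ (LinearMap.ker (Fhom g k).toIntLinearMap : Set (ℤ × ℤ × ℤ)) := by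
    intro a b c h1 h2 h3
    simp only [SetLike.mem_coe, LinearMap.mem_ker, AddMonoidHom.coe_toIntLinearMap]
    show ((2 * b - (g:ℤ) * c : ℤ), ((b + ((k:ℤ)+1) * c : ℤ) : ZMod 2), ((a : ℤ) : ZMod 2)) = 0
    rw [h1, (ZMod.intCast_zmod_eq_zero_iff_dvd _ 2).mpr h2,
      (ZMod.intCast_zmod_eq_zero_iff_dvd _ 2).mpr h3]
    rfl
  rintro v hv
  simp only [Set.mem_insert_iff, Set.mem_singleton_iff] at hv
  rcases hv with rfl | rfl | rfl
  · exact key 2 0 0 (by ring) ⟨0, by ring⟩ ⟨1, by ring⟩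
  · exact key 0 (2 * g) 4 (by ring) ⟨(g:ℤ) + ((k:ℤ)+1) * 2, by ring⟩ ⟨0, by ring⟩
  · exact key 0 ((g:ℤ) * (g + 1)) (2 * ((g:ℤ) + 1)) (by ring)
      ⟨((k:ℤ)+1) * ((g:ℤ) + 2*(k:ℤ) + 2), by rw [hk]; push_cast; ring⟩ ⟨0, by ring⟩

end aux

/-- For odd `g = 2k + 1 ≥ 3`, the classes of `t + ((g+1)/2)·s`, `2t + g·s` and
`r` give an explicit decomposition `G ≅ ℤ ⊕ ℤ/2 ⊕ ℤ/2`. -/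
theorem abelianization_iso_odd (g k : ℕ) (hg : 3 ≤ g) (hk : g = 2 * k + 1) :
    ∃ f : ℤ × ZMod 2 × ZMod 2 ≃+ ((ℤ × ℤ × ℤ) ⧸ relSub g),
      f (1, 0, 0) = Submodule.Quotient.mk ((0 : ℤ), ((k : ℤ) + 1), (1 : ℤ)) ∧
      f (0, 1, 0) = Submodule.Quotient.mk ((0 : ℤ), (g : ℤ), (2 : ℤ)) ∧
      f (0, 0, 1) = Submodule.Quotient.mk ((1 : ℤ), (0 : ℤ), (0 : ℤ)) := by
  set Q := (ℤ × ℤ × ℤ) ⧸ relSub g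
  set q1 : Q := Submodule.Quotient.mk ((0 : ℤ), ((k : ℤ) + 1), (1 : ℤ)) with hq1
  set q2 : Q := Submodule.Quotient.mk ((0 : ℤ), (g : ℤ), (2 : ℤ)) with hq2
  set q3 : Q := Submodule.Quotient.mk ((1 : ℤ), (0 : ℤ), (0 : ℤ)) with hq3
  -- Fbar : Q →ₗ[ℤ] target
  have hker := ker_le g k hk
  let Fbar : Q →ₗ[ℤ] ℤ × ZMod 2 × ZMod 2 :=
    (relSub g).liftQ (Fhom g k).toIntLinearMap hker
  have hF : ∀ v : ℤ × ℤ × ℤ, Fbar (Submodule.Quotient.mk v) = Fhom g k v := fun v => rfl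
  -- order two elements
  have h2q2 : (zmultiplesHom Q q2) ((2 : ℕ) : ℤ) = 0 := by
    show ((2:ℕ):ℤ) • q2 = 0
    rw [hq2, ← Submodule.Quotient.mk_smul, Submodule.Quotient.mk_eq_zero]
    convert mem2 g using 2 <;> simp [Prod.smul_def] <;> ring
  have h2q3 : (zmultiplesHom Q q3) ((2 : ℕ) : ℤ) = 0 := by
    show ((2:ℕ):ℤ) • q3 = 0
    rw [hq3, ← Submodule.Quotient.mk_smul, Submodule.Quotient.mk_eq_zero]
    convert mem1 g using 2 <;> simp [Prod.smul_def]
  let ζ : ZMod 2 →+ Q := ZMod.lift 2 ⟨zmultiplesHom Q q2, h2q2⟩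
  let ξ : ZMod 2 →+ Q := ZMod.lift 2 ⟨zmultiplesHom Q q3, h2q3⟩
  have hζ : ∀ m : ℤ, ζ ((m : ℤ) : ZMod 2) = m • q2 := fun m => ZMod.lift_coe _ _ m
  have hξ : ∀ m : ℤ, ξ ((m : ℤ) : ZMod 2) = m • q3 := fun m => ZMod.lift_coe _ _ m
  let Gmap : ℤ × ZMod 2 × ZMod 2 →+ Q :=
    AddMonoidHom.mk' (fun p => p.1 • q1 + ζ p.2.1 + ξ p.2.2)
      (by intro x y; simp [add_smul, map_add]; abel)
  have hGmap : ∀ p : ℤ × ZMod 2 × ZMod 2, Gmap p = p.1 • q1 + ζ p.2.1 + ξ p.2.2 :=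
    fun p => rfl
  have left_inv : ∀ p : ℤ × ZMod 2 × ZMod 2, Fbar (Gmap p) = p := by
    rintro ⟨a, b, c⟩
    obtain ⟨m, rfl⟩ := ZMod.intCast_surjective b
    obtain ⟨n, rfl⟩ := ZMod.intCast_surjective c
    rw [hGmap]
    simp only [hζ, hξ]
    rw [hq1, hq2, hq3, ← Submodule.Quotient.mk_smul, ← Submodule.Quotient.mk_smul,
      ← Submodule.Quotient.mk_smul, ← Submodule.Quotient.mk_add, ← Submodule.Quotient.mk_add,
      hF]
    show ((2 * _ - _ : ℤ), _, _) = _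
    refine Prod.ext ?_ (Prod.ext ?_ ?_)
    · show (2 * (a * ((k:ℤ)+1) + m * g + n * 0) - g * (a * 1 + m * 2 + n * 0) : ℤ) = a
      rw [hk]; push_cast; ring
    · show (((a * ((k:ℤ)+1) + m * g + n * 0) + ((k:ℤ)+1) * (a * 1 + m * 2 + n * 0) : ℤ) : ZMod 2)
        = (m : ZMod 2)
      have : ((a * ((k:ℤ)+1) + m * g + n * 0) + ((k:ℤ)+1) * (a * 1 + m * 2 + n * 0) : ℤ)
          = m + 2 * (a * ((k:ℤ)+1) + m * (2*(k:ℤ) + 1)) := by rw [hk]; push_cast; ring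
      rw [this, Int.cast_add, Int.cast_mul,
        show (((2:ℤ)) : ZMod 2) = 0 from by decide, zero_mul, add_zero]
    · show (((a * 0 + m * 0 + n * 1 : ℤ)) : ZMod 2) = (n : ZMod 2)
      norm_num
  have right_inv : ∀ x : Q, Gmap (Fbar x) = x := by
    intro x
    obtain ⟨v, rfl⟩ := Submodule.Quotient.mk_surjective _ x
    obtain ⟨a, b, c⟩ := v
    rw [hF]
    show Gmap ((2*b - g*c : ℤ), ((b + (k+1)*c : ℤ) : ZMod 2), ((a : ℤ) : ZMod 2)) = _
    rw [hGmap]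
    simp only [hζ, hξ]
    rw [hq1, hq2, hq3, ← Submodule.Quotient.mk_smul, ← Submodule.Quotient.mk_smul,
      ← Submodule.Quotient.mk_smul, ← Submodule.Quotient.mk_add, ← Submodule.Quotient.mk_add,
      Submodule.Quotient.eq]
    have hmem : b • ((0 : ℤ), (2 * g : ℤ), (4 : ℤ)) ∈ relSub g :=
      Submodule.smul_mem _ b (mem2 g)
    convert hmem using 1
    refine Prod.ext ?_ (Prod.ext ?_ ?_)
    · show ((2*b - g*c) * 0 + (b + (k+1)*c) * 0 + a * 1 - a : ℤ) = b * 0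
      ring
    · show ((2*b - g*c) * ((k:ℤ)+1) + (b + (k+1)*c) * g + a * 0 - b : ℤ) = b * (2 * g)
      rw [hk]; push_cast; ring
    · show ((2*b - g*c) * 1 + (b + (k+1)*c) * 2 + a * 0 - c : ℤ) = b * 4
      rw [hk]; push_cast; ring
  refine ⟨{ toFun := Gmap, invFun := Fbar, left_inv := left_inv, right_inv := right_inv,
            map_add' := Gmap.map_add }, ?_, ?_, ?_⟩
  · show Gmap (1, 0, 0) = q1
    rw [hGmap]
    simp only [one_smul]
    rw [show (0 : ZMod 2) = ((0:ℤ) : ZMod 2) from by norm_num, hζ, hξ]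
    simp
  · show Gmap (0, 1, 0) = q2
    rw [hGmap]
    rw [show (1 : ZMod 2) = ((1:ℤ) : ZMod 2) from by norm_num,
        show (0 : ZMod 2) = ((0:ℤ) : ZMod 2) from by norm_num, hζ, hξ]
    simp
  · show Gmap (0, 0, 1) = q3
    rw [hGmap]
    rw [show (1 : ZMod 2) = ((1:ℤ) : ZMod 2) from by norm_num,
        show (0 : ZMod 2) = ((0:ℤ) : ZMod 2) from by norm_num, hζ, hξ]
    simp
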